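/- Let p, q, a, b be real numbers with p, q > 0 and a, b > 1, x ∈ (0,1), and for t ≥ 0 let j(t) denote the number of positive integers n with (n+a)(n+b)^{q/p} ≤ e^t. Then the function ψ(p) defined by ψ(p) = ( Φ_{p,q}(a,b;x) / ((1+a)^p (1+b)^q) − x/(1−x) ) · (x−1)/(p x) satisfies ψ(p) = ∫_0^∞ e^{−p t} x^{j(t)} dt for all p > 0. -/

import Mathlib

open MeasureTheory

/-- The generalized polylogarithm with real parameters. -/
noncomputable def genPolylogR (p q a b x : ℝ) : ℝ :=
  ∑' k : ℕ, ((1 + a) ^ p * (1 + b) ^ q /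
      (((k : ℝ) + 1 + a) ^ p * ((k : ℝ) + 1 + b) ^ q)) * x ^ (k + 1)

/-- `jCountR p q a b t` is the number of positive integers `n` with `(n+a)(n+b)^{q/p} ≤ e^t`. -/
noncomputable def jCountR (p q a b : ℝ) (t : ℝ) : ℕ :=
  Set.ncard {n : ℕ | 0 < n ∧ ((n : ℝ) + a) * ((n : ℝ) + b) ^ (q / p) ≤ Real.exp t}

set_option maxHeartbeats 1000000 in
theorem psi_integral_representation
    (q a b x : ℝ) (hq : 0 < q) (ha : 1 < a) (hb : 1 < b) (hx : x ∈ Set.Ioo (0 : ℝ) 1) :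
    ∀ p : ℝ, 0 < p →
      (genPolylogR p q a b x / ((1 + a) ^ p * (1 + b) ^ q) - x / (1 - x)) * (x - 1) / (p * x) =
        ∫ t in Set.Ioi (0 : ℝ), Real.exp (-(p * t)) * x ^ (jCountR p q a b t) := by
  obtain ⟨hx0, hx1⟩ := hx
  intro p hp
  have hqp : 0 < q / p := div_pos hq hp
  set g : ℕ → ℝ := fun n => ((n : ℝ) + a) * ((n : ℝ) + b) ^ (q / p) with hgdef
  have hgpos : ∀ n, 0 < g n := fun n => by
    have : (0:ℝ) < (n:ℝ) + a := by positivity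
    have : (0:ℝ) < ((n:ℝ) + b) ^ (q/p) := Real.rpow_pos_of_pos (by positivity) _
    positivity
  have hg_ge : ∀ n : ℕ, (n : ℝ) ≤ g n := by
    intro n
    have h1 : (1:ℝ) ≤ ((n:ℝ) + b) ^ (q/p) :=
      Real.one_le_rpow (by nlinarith [Nat.cast_nonneg (α := ℝ) n]) hqp.le
    calc (n:ℝ) ≤ (n:ℝ) + a := by linarith
    _ ≤ ((n:ℝ) + a) * (((n:ℝ) + b) ^ (q/p)) :=
        le_mul_of_one_le_right (by positivity) h1
  have hg_gt1 : ∀ n : ℕ, 1 ≤ n → 1 < g n := by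
    intro n hn
    have h1 : (1:ℝ) ≤ ((n:ℝ) + b) ^ (q/p) :=
      Real.one_le_rpow (by nlinarith [Nat.cast_nonneg (α := ℝ) n]) hqp.le
    have hn1 : (1:ℝ) ≤ (n:ℝ) := by exact_mod_cast hn
    calc (1:ℝ) < (n:ℝ) + a := by linarith
    _ ≤ ((n:ℝ) + a) * (((n:ℝ) + b) ^ (q/p)) :=
        le_mul_of_one_le_right (by positivity) h1
  have hgmono : StrictMono g := by
    intro n m hnm
    have hc1 : ((n:ℝ)) < (m:ℝ) := by exact_mod_cast hnm
    have h2 : ((n:ℝ) + b) ^ (q/p) ≤ ((m:ℝ) + b) ^ (q/p) :=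
      Real.rpow_le_rpow (by positivity) (by linarith) hqp.le
    exact mul_lt_mul (by linarith) h2 (Real.rpow_pos_of_pos (by positivity) _)
      (by positivity)
  -- the jump points
  set s : ℕ → ℝ := fun n => if n = 0 then 0 else Real.log (g n) with hsdef
  have hs0 : s 0 = 0 := by simp [hsdef]
  have hsval : ∀ n : ℕ, s (n + 1) = Real.log (g (n + 1)) := fun n => by simp [hsdef]
  have hs_nonneg : ∀ n, 0 ≤ s n := by
    intro n
    rcases n with _ | n
    · simp [hs0]
    · rw [hsval]; exact Real.log_nonneg (hg_gt1 _ (Nat.succ_le_succ (Nat.zero_le n))).le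
  have hsmono : StrictMono s := by
    apply strictMono_nat_of_lt_succ
    intro n
    rcases n with _ | n
    · rw [hs0, hsval]
      exact Real.log_pos (hg_gt1 1 le_rfl)
    · rw [hsval, hsval]
      exact Real.log_lt_log (hgpos _) (hgmono (by omega))
  -- membership criterion
  have hmem : ∀ (t : ℝ) (k : ℕ), 1 ≤ k → (g k ≤ Real.exp t ↔ s k ≤ t) := by
    intro t k hk
    rcases k with _ | k
    · omega
    · rw [hsval, Real.log_le_iff_le_exp (hgpos _)]
  set u : ℕ → ℝ := fun n => Real.exp (-(p * s n)) with hudef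
  have hu0 : u 0 = 1 := by simp [hudef, hs0]
  have hu_pos : ∀ n, 0 < u n := fun n => Real.exp_pos _
  have hu_le_one : ∀ n, u n ≤ 1 := by
    intro n
    apply Real.exp_le_one_iff.mpr
    have := hs_nonneg n
    nlinarith
  have hu_anti : ∀ n, u (n + 1) ≤ u n := by
    intro n
    apply Real.exp_le_exp.mpr
    have := (hsmono (Nat.lt_succ_self n)).le
    nlinarith
  -- the integral of exp(-(p t)) over intervals
  have key_int : ∀ c d : ℝ, c ≤ d →
      ∫ t in Set.Ioo c d, Real.exp (-(p*t)) = (Real.exp (-(p*c)) - Real.exp (-(p*d)))/p := by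
    intro c d hcd
    rw [← integral_Ioc_eq_integral_Ioo, ← intervalIntegral.integral_of_le hcd]
    have hderiv : ∀ t : ℝ, HasDerivAt (fun t => -(Real.exp (-(p*t))/p)) (Real.exp (-(p*t))) t := by
      intro t
      have h1 : HasDerivAt (fun t : ℝ => -(p*t)) (-p) t := by
        simpa [neg_mul] using (hasDerivAt_id t).const_mul (-p)
      have := ((h1.exp).div_const p).neg
      refine HasDerivAt.congr_deriv this ?_
      rw [mul_neg, neg_div, neg_neg, mul_div_assoc, div_self hp.ne', mul_one]
    rw [intervalIntegral.integral_eq_sub_of_hasDerivAt (fun t _ => hderiv t)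
      ((Real.continuous_exp.comp (by continuity)).intervalIntegrable c d)]
    ring
  -- the summands
  set f : ℕ → ℝ → ℝ := fun n t =>
    x ^ n * Set.indicator (Set.Ico (s n) (s (n+1))) (fun t => Real.exp (-(p*t))) t with hfdef
  have hfint : ∀ n, Integrable (f n) (volume.restrict (Set.Ioi (0:ℝ))) := by
    intro n
    have h1 : IntegrableOn (fun t : ℝ => Real.exp (-(p * t))) (Set.Ioi 0) volume := by
      simpa [neg_mul] using exp_neg_integrableOn_Ioi 0 hp
    exact (h1.indicator measurableSet_Ico).const_mul _
  have hfnonneg : ∀ n t, 0 ≤ f n t := by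
    intro n t
    apply mul_nonneg (by positivity)
    apply Set.indicator_nonneg
    intro y _
    positivity
  have hfval : ∀ n, ∫ t in Set.Ioi (0:ℝ), f n t = x ^ n * ((u n - u (n+1))/p) := by
    intro n
    rw [hfdef]
    simp only
    rw [MeasureTheory.integral_const_mul, MeasureTheory.integral_indicator measurableSet_Ico,
      Measure.restrict_restrict measurableSet_Ico]
    have hiff : Set.Ico (s n) (s (n+1)) ∩ Set.Ioi 0 = if n = 0 then Set.Ioo (s n) (s (n+1))
        else Set.Ico (s n) (s (n+1)) := by
      rcases n with _ | n
      · simp only [if_pos rfl]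
        ext t
        simp only [Set.mem_inter_iff, Set.mem_Ico, Set.mem_Ioi, Set.mem_Ioo, hs0]
        constructor
        · rintro ⟨⟨_, h2⟩, h3⟩; exact ⟨h3, h2⟩
        · rintro ⟨h1, h2⟩; exact ⟨⟨le_of_lt h1, h2⟩, h1⟩
      · simp only [if_neg (Nat.succ_ne_zero n)]
        apply Set.inter_eq_left.mpr
        intro t ht
        have hpos : 0 < s (n+1) := by
          rw [hsval]; exact Real.log_pos (hg_gt1 _ (Nat.succ_le_succ (Nat.zero_le n)))
        exact lt_of_lt_of_le hpos ht.1
    rw [hiff]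
    have hle := (hsmono (Nat.lt_succ_self n)).le
    rcases n with _ | n
    · rw [if_pos rfl, key_int _ _ hle]
    · rw [if_neg (Nat.succ_ne_zero n), integral_Ico_eq_integral_Ioo, key_int _ _ hle]
  have hgeom : Summable (fun n : ℕ => x ^ n) := summable_geometric_of_lt_one hx0.le hx1
  have hnormsum : Summable (fun n => ∫ t in Set.Ioi (0:ℝ), ‖f n t‖) := by
    have heq : ∀ n, (∫ t in Set.Ioi (0:ℝ), ‖f n t‖) = x ^ n * ((u n - u (n+1))/p) := by
      intro n
      rw [← hfval n]
      apply integral_congr_ae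
      filter_upwards with t
      exact Real.norm_of_nonneg (hfnonneg n t)
    rw [funext heq]
    apply Summable.of_nonneg_of_le (fun n =>
        mul_nonneg (by positivity) (div_nonneg (by linarith [hu_anti n]) hp.le))
      (fun n => ?_) (hgeom.div_const p)
    have h1 : u n - u (n+1) ≤ 1 := by
      have := hu_le_one n; have := (hu_pos (n+1)).le; linarith
    have h2 : (u n - u (n+1))/p ≤ 1/p := by gcongr
    calc x ^ n * ((u n - u (n+1))/p) ≤ x ^ n * (1/p) := by
          apply mul_le_mul_of_nonneg_left h2 (by positivity)
    _ = x ^ n / p := by ring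
  have hswap := MeasureTheory.integral_tsum_of_summable_integral_norm hfint hnormsum
  -- pointwise identity
  have hpt : ∀ t ∈ Set.Ioi (0:ℝ),
      (∑' n, f n t) = Real.exp (-(p*t)) * x ^ (jCountR p q a b t) := by
    intro t ht
    simp only [Set.mem_Ioi] at ht
    -- find the bracketing index
    have hex : ∃ k, t < s k := by
      refine ⟨⌈Real.exp t⌉₊ + 1, ?_⟩
      have hk1 : 1 ≤ ⌈Real.exp t⌉₊ + 1 := by omega
      rw [hsval]
      rw [Real.lt_log_iff_exp_lt (hgpos _)]
      calc Real.exp t ≤ (⌈Real.exp t⌉₊ : ℝ) := Nat.le_ceil _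
      _ < ((⌈Real.exp t⌉₊ + 1 : ℕ) : ℝ) := by push_cast; linarith
      _ ≤ g (⌈Real.exp t⌉₊ + 1) := hg_ge _
    set N := Nat.find hex with hN
    have hN0 : N ≠ 0 := by
      intro h
      have := Nat.find_spec hex
      rw [← hN, h, hs0] at this
      linarith
    obtain ⟨n, hn⟩ : ∃ n, N = n + 1 := ⟨N - 1, by omega⟩
    have hn2 : t < s (n + 1) := by rw [← hn]; exact Nat.find_spec hex
    have hn1 : s n ≤ t := by
      by_contra h
      exact Nat.find_min hex (by omega : n < N) (lt_of_not_ge h)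
    -- j count
    have hj : jCountR p q a b t = n := by
      have hset : {k : ℕ | 0 < k ∧ g k ≤ Real.exp t} = ↑(Finset.Icc 1 n) := by
        ext k
        simp only [Set.mem_setOf_eq, Finset.coe_Icc, Set.mem_Icc]
        constructor
        · rintro ⟨hk0, hkle⟩
          refine ⟨hk0, ?_⟩
          by_contra h
          have hkn : n + 1 ≤ k := by omega
          have h3 : s (n+1) ≤ s k := hsmono.monotone hkn
          have h4 : t < s k := lt_of_lt_of_le hn2 h3
          have h5 : ¬ g k ≤ Real.exp t := by
            rw [hmem t k hk0]
            exact not_le.mpr h4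
          exact h5 hkle
        · rintro ⟨hk1, hkn⟩
          refine ⟨hk1, ?_⟩
          rw [hmem t k hk1]
          exact le_trans (hsmono.monotone hkn) hn1
      show Set.ncard {k : ℕ | 0 < k ∧ g k ≤ Real.exp t} = n
      rw [hset, Set.ncard_coe_finset, Nat.card_Icc]
      omega
    have htsum : (∑' m, f m t) = f n t := by
      apply tsum_eq_single
      intro m hm
      rw [hfdef]
      simp only
      rw [Set.indicator_of_notMem, mul_zero]
      intro hmem'
      obtain ⟨hm1, hm2⟩ := Set.mem_Ico.mp hmem'
      rcases lt_or_gt_of_ne hm with h | h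
      · -- m < n : s (m+1) ≤ s n ≤ t
        have h3 : s (m+1) ≤ s n := hsmono.monotone h
        have h4 : s (m+1) ≤ t := le_trans h3 hn1
        exact absurd hm2 (not_lt.mpr h4)
      · -- m > n : t < s (n+1) ≤ s m
        have h3 : s (n+1) ≤ s m := hsmono.monotone h
        have h4 : t < s m := lt_of_lt_of_le hn2 h3
        exact absurd hm1 (not_le.mpr h4)
    rw [htsum, hj, hfdef]
    simp only
    rw [Set.indicator_of_mem (Set.mem_Ico.mpr ⟨hn1, hn2⟩)]
    ring
  -- main integral identity
  have hIR : (∫ t in Set.Ioi (0:ℝ), Real.exp (-(p*t)) * x ^ (jCountR p q a b t))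
      = ∑' n : ℕ, x ^ n * ((u n - u (n+1))/p) := by
    have h1 : (∫ t in Set.Ioi (0:ℝ), Real.exp (-(p*t)) * x ^ (jCountR p q a b t))
        = ∫ t in Set.Ioi (0:ℝ), ∑' n, f n t :=
      MeasureTheory.setIntegral_congr_fun measurableSet_Ioi (fun t ht => (hpt t ht).symm)
    rw [h1, ← hswap]
    exact tsum_congr hfval
  -- summability of the pieces
  have hsumA : Summable (fun n : ℕ => x ^ n * u n) := by
    apply Summable.of_nonneg_of_le (fun n => by have := (hu_pos n).le; positivity)
      (fun n => ?_) hgeom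
    calc x ^ n * u n ≤ x ^ n * 1 := by
          apply mul_le_mul_of_nonneg_left (hu_le_one n) (by positivity)
    _ = x ^ n := by ring
  have hsumB : Summable (fun n : ℕ => x ^ n * u (n+1)) := by
    apply Summable.of_nonneg_of_le (fun n => by have := (hu_pos (n+1)).le; positivity)
      (fun n => ?_) hgeom
    calc x ^ n * u (n+1) ≤ x ^ n * 1 := by
          apply mul_le_mul_of_nonneg_left (hu_le_one (n+1)) (by positivity)
    _ = x ^ n := by ring
  set B := ∑' n : ℕ, x ^ n * u (n+1) with hBdef
  have hRHS : (∑' n : ℕ, x ^ n * ((u n - u (n+1))/p)) = (1 + x * B - B) / p := by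
    have h1 : (∑' n : ℕ, x ^ n * ((u n - u (n+1))/p))
        = (∑' n : ℕ, (x ^ n * u n - x ^ n * u (n+1))) / p := by
      rw [← tsum_div_const]
      exact tsum_congr fun n => by ring
    rw [h1, Summable.tsum_sub hsumA hsumB]
    have hA : (∑' n : ℕ, x ^ n * u n) = 1 + x * B := by
      rw [Summable.tsum_eq_zero_add hsumA]
      congr 1
      · simp [hu0]
      · rw [hBdef, ← tsum_mul_left]
        exact tsum_congr fun n => by ring
    rw [hA]
  -- relate u (n+1) to the polylog denominators
  have hDu : ∀ n : ℕ, u (n+1) = 1 / (((n:ℝ)+1+a)^p * ((n:ℝ)+1+b)^q) := by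
    intro n
    have hgn : g (n+1) = (((n:ℝ)+1+a)) * (((n:ℝ)+1+b)) ^ (q/p) := by
      rw [hgdef]
      push_cast
      ring_nf
    have hpos1 : (0:ℝ) < (n:ℝ)+1+a := by positivity
    have hpos2 : (0:ℝ) < (n:ℝ)+1+b := by positivity
    have hgp : g (n+1) ^ p = ((n:ℝ)+1+a)^p * ((n:ℝ)+1+b)^q := by
      rw [hgn, Real.mul_rpow hpos1.le (Real.rpow_nonneg hpos2.le _),
        ← Real.rpow_mul hpos2.le, div_mul_cancel₀ q hp.ne']
    rw [hudef]
    simp only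
    rw [hsval]
    rw [show Real.exp (-(p * Real.log (g (n+1)))) = 1 / g (n+1) ^ p by
      rw [Real.rpow_def_of_pos (hgpos (n+1)), one_div, ← Real.exp_neg]; ring_nf]
    rw [hgp]
  -- the polylog sum
  have hC : (0:ℝ) < (1 + a) ^ p * (1 + b) ^ q := by
    have h1 : (0:ℝ) < (1+a) ^ p := Real.rpow_pos_of_pos (by linarith) _
    have h2 : (0:ℝ) < (1+b) ^ q := Real.rpow_pos_of_pos (by linarith) _
    positivity
  have hgen : genPolylogR p q a b x = ((1 + a) ^ p * (1 + b) ^ q) * (x * B) := by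
    rw [genPolylogR]
    have hterm : ∀ k : ℕ, ((1 + a) ^ p * (1 + b) ^ q /
        (((k : ℝ) + 1 + a) ^ p * ((k : ℝ) + 1 + b) ^ q)) * x ^ (k + 1)
        = ((1 + a) ^ p * (1 + b) ^ q) * (x * (x ^ k * u (k+1))) := by
      intro k
      rw [hDu k]
      ring
    rw [tsum_congr hterm, tsum_mul_left, tsum_mul_left]
  rw [hIR, hRHS, hgen]
  have h1x : (1:ℝ) - x ≠ 0 := by linarith
  field_simp
  ring
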